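/- For every $n \ge 2$, the least doubling constant of the path graph satisfies $1 + 2\cos\big(\frac{\pi}{n+1}\big) \le C_{L_n} < 3$. -/

import Mathlib

open Finset Real

/-- The closed ball of center `j` and radius `k` in the path graph `L_n` on `{1,…,n}`. -/
def lball (n j k : ℕ) : Finset ℕ :=
  (Finset.Icc 1 n).filter fun i => j - k ≤ i ∧ i ≤ j + k

/-- The doubling constant `C_μ` of a weight `μ` on `L_n`. -/
noncomputable def Cmu (n : ℕ) (μ : ℕ → ℝ) : ℝ :=
  sSup {x | ∃ j ∈ Finset.Icc 1 n, ∃ k : ℕ,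
    x = (∑ i ∈ lball n j (2 * k + 1), μ i) / (∑ i ∈ lball n j k, μ i)}

/-- The least doubling constant `C_{L_n}` of the path graph `L_n`. -/
noncomputable def CLn (n : ℕ) : ℝ :=
  sInf {c | ∃ μ : ℕ → ℝ, (∀ j ∈ Finset.Icc 1 n, 0 < μ j) ∧ c = Cmu n μ}

/-! ### Auxiliary definitions and lemmas -/

/-- The doubling ratio at center `j` and radius `k`. -/
noncomputable def lratio (n : ℕ) (μ : ℕ → ℝ) (j k : ℕ) : ℝ :=
  (∑ i ∈ lball n j (2 * k + 1), μ i) / (∑ i ∈ lball n j k, μ i)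

/-- The set of doubling ratios of a weight `μ`. -/
def ratioSet (n : ℕ) (μ : ℕ → ℝ) : Set ℝ :=
  {x | ∃ j ∈ Finset.Icc 1 n, ∃ k : ℕ, x = lratio n μ j k}

lemma Cmu_eq (n : ℕ) (μ : ℕ → ℝ) : Cmu n μ = sSup (ratioSet n μ) := rfl

lemma lball_eq (n j k : ℕ) : lball n j k = Finset.Icc (max 1 (j - k)) (min n (j + k)) := by
  ext i; simp [lball]; omega

lemma lball_card (n j k : ℕ) : (lball n j k).card = min n (j + k) + 1 - max 1 (j - k) := by
  rw [lball_eq, Nat.card_Icc]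

lemma lball_top (n j k : ℕ) (hj : j ≤ n) (hk : n ≤ k) : lball n j k = Finset.Icc 1 n := by
  ext i; simp [lball]; omega

lemma lball_subset (n j k : ℕ) : lball n j k ⊆ Finset.Icc 1 n := Finset.filter_subset _ _

lemma lball_zero (n j : ℕ) (h1 : 1 ≤ j) (h2 : j ≤ n) : lball n j 0 = {j} := by
  ext i; simp [lball]; omega

lemma lratio_stab (n : ℕ) (μ : ℕ → ℝ) (j k : ℕ) (hj : j ≤ n) :
    lratio n μ j k = lratio n μ j (min k n) := by
  rcases le_or_gt k n with h | h
  · rw [min_eq_left h]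
  · rw [min_eq_right h.le]
    unfold lratio
    rw [lball_top n j k hj h.le, lball_top n j n hj le_rfl,
      lball_top n j (2 * k + 1) hj (by omega), lball_top n j (2 * n + 1) hj (by omega)]

lemma ratioSet_finite (n : ℕ) (μ : ℕ → ℝ) : (ratioSet n μ).Finite := by
  have : ratioSet n μ ⊆ (fun p : ℕ × ℕ => lratio n μ p.1 p.2) ''
      (↑(Finset.Icc 1 n ×ˢ Finset.range (n + 1)) : Set (ℕ × ℕ)) := by
    rintro x ⟨j, hj, k, rfl⟩
    simp only [Finset.mem_Icc] at hj
    exact ⟨(j, min k n), by simp [Finset.mem_Icc]; omega,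
      (lratio_stab n μ j k hj.2).symm⟩
  exact Set.Finite.subset ((Finset.Icc 1 n ×ˢ Finset.range (n + 1)).finite_toSet.image _) this

lemma ratioSet_bddAbove (n : ℕ) (μ : ℕ → ℝ) : BddAbove (ratioSet n μ) :=
  (ratioSet_finite n μ).bddAbove

lemma lratio_mem (n : ℕ) (μ : ℕ → ℝ) (j k : ℕ) (h1 : 1 ≤ j) (h2 : j ≤ n) :
    lratio n μ j k ∈ ratioSet n μ := ⟨j, by simp [Finset.mem_Icc]; omega, k, rfl⟩

lemma Cmu_nonneg (n : ℕ) (hn : 2 ≤ n) (μ : ℕ → ℝ)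
    (hμ : ∀ j ∈ Finset.Icc 1 n, 0 < μ j) : 0 ≤ Cmu n μ := by
  rw [Cmu_eq]
  have h0 : (0 : ℝ) ≤ lratio n μ 1 0 :=
    div_nonneg
      (Finset.sum_nonneg fun i hi => (hμ i (lball_subset _ _ _ hi)).le)
      (Finset.sum_nonneg fun i hi => (hμ i (lball_subset _ _ _ hi)).le)
  exact le_trans h0 (le_csSup (ratioSet_bddAbove n μ) (lratio_mem n μ 1 0 le_rfl (by omega)))

/-! ### The lower bound via the sine eigenvector -/

lemma sin_ball_key (n : ℕ) (hn : 2 ≤ n) (p : ℕ) (hp : p ∈ Finset.Icc 1 n) :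
    ∑ i ∈ lball n p 1, Real.sin (i * (π / (n + 1))) =
      (1 + 2 * Real.cos (π / (n + 1))) * Real.sin (p * (π / (n + 1))) := by
  simp only [Finset.mem_Icc] at hp
  set θ : ℝ := π / (n + 1) with hθ
  by_cases hp1 : p = 1
  · subst hp1
    have hb : lball n 1 1 = {1, 2} := by ext i; simp [lball]; omega
    rw [hb, Finset.sum_insert (by simp), Finset.sum_singleton]
    push_cast
    rw [one_mul, Real.sin_two_mul]
    ring
  · by_cases hpn : p = n
    · have hb : lball n p 1 = {p - 1, p} := by ext i; simp [lball]; omega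
      rw [hb, Finset.sum_insert (by simp <;> omega), Finset.sum_singleton]
      have hc : ((p - 1 : ℕ) : ℝ) = (p : ℝ) - 1 := by
        push_cast [Nat.cast_sub (show 1 ≤ p by omega)]; try ring
      have h0 : Real.sin ((p : ℝ) * θ + θ) = 0 := by
        rw [show (p : ℝ) * θ + θ = ((p : ℝ) + 1) * θ by ring, hθ, hpn]
        rw [mul_div_cancel₀ π (by positivity : ((n : ℝ) + 1) ≠ 0)]
        exact Real.sin_pi
      rw [Real.sin_add] at h0
      rw [hc, show ((p : ℝ) - 1) * θ = (p : ℝ) * θ - θ by ring, Real.sin_sub]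
      nlinarith [h0]
    · have hb : lball n p 1 = {p - 1, p, p + 1} := by ext i; simp [lball]; omega
      rw [hb, Finset.sum_insert (by simp <;> omega), Finset.sum_insert (by simp <;> omega),
        Finset.sum_singleton]
      have hc : ((p - 1 : ℕ) : ℝ) = (p : ℝ) - 1 := by
        push_cast [Nat.cast_sub (show 1 ≤ p by omega)]; try ring
      rw [hc]
      push_cast
      rw [show ((p : ℝ) - 1) * θ = (p : ℝ) * θ - θ by ring,
        show ((p : ℝ) + 1) * θ = (p : ℝ) * θ + θ by ring, Real.sin_sub, Real.sin_add]
      ring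

lemma Cmu_lb (n : ℕ) (hn : 2 ≤ n) (μ : ℕ → ℝ) (hμ : ∀ j ∈ Finset.Icc 1 n, 0 < μ j) :
    1 + 2 * Real.cos (π / (n + 1)) ≤ Cmu n μ := by
  set θ : ℝ := π / (n + 1) with hθ
  set lam : ℝ := 1 + 2 * Real.cos θ with hlam
  set I : Finset ℕ := Finset.Icc 1 n with hI
  have hsin : ∀ p ∈ I, 0 < Real.sin (p * θ) := by
    intro p hp
    simp only [hI, Finset.mem_Icc] at hp
    apply Real.sin_pos_of_pos_of_lt_pi
    · have : (0 : ℝ) < θ := by positivity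
      have h1 : (1 : ℝ) ≤ (p : ℝ) := by exact_mod_cast hp.1
      nlinarith
    · have hpn : (p : ℝ) < (n : ℝ) + 1 := by exact_mod_cast Nat.lt_succ_of_le hp.2
      have h2 : (p : ℝ) * θ < ((n : ℝ) + 1) * θ :=
        mul_lt_mul_of_pos_right hpn (by positivity)
      calc (p : ℝ) * θ < ((n : ℝ) + 1) * θ := h2
        _ = π := by rw [hθ, mul_div_cancel₀ π (by positivity : ((n : ℝ) + 1) ≠ 0)]
  have hb : ∀ (f : ℕ → ℝ) (p : ℕ), (∑ i ∈ lball n p 1, f i) =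
      ∑ i ∈ I, if p - 1 ≤ i ∧ i ≤ p + 1 then f i else 0 := by
    intro f p
    rw [show lball n p 1 = I.filter (fun i => p - 1 ≤ i ∧ i ≤ p + 1) from rfl,
      Finset.sum_filter]
  have sumcomm : ∑ p ∈ I, Real.sin (p * θ) * ∑ i ∈ lball n p 1, μ i
      = ∑ p ∈ I, μ p * ∑ i ∈ lball n p 1, Real.sin (i * θ) := by
    calc ∑ p ∈ I, Real.sin (p * θ) * ∑ i ∈ lball n p 1, μ i
        = ∑ p ∈ I, ∑ i ∈ I, if p - 1 ≤ i ∧ i ≤ p + 1 then Real.sin (p * θ) * μ i else 0 := by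
          refine Finset.sum_congr rfl fun p _ => ?_
          rw [hb, Finset.mul_sum]
          exact Finset.sum_congr rfl fun i _ => by rw [mul_ite, mul_zero]
      _ = ∑ i ∈ I, ∑ p ∈ I, if p - 1 ≤ i ∧ i ≤ p + 1 then Real.sin (p * θ) * μ i else 0 :=
          Finset.sum_comm
      _ = ∑ i ∈ I, μ i * ∑ p ∈ lball n i 1, Real.sin (p * θ) := by
          refine Finset.sum_congr rfl fun i _ => ?_
          rw [hb, Finset.mul_sum]
          refine Finset.sum_congr rfl fun p _ => ?_
          have hsym : (p - 1 ≤ i ∧ i ≤ p + 1) ↔ (i - 1 ≤ p ∧ p ≤ i + 1) := by omega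
          rw [if_congr hsym rfl rfl, mul_ite, mul_zero, mul_comm]
  have main : ∑ p ∈ I, Real.sin (p * θ) * (∑ i ∈ lball n p 1, μ i)
      = lam * ∑ p ∈ I, Real.sin (p * θ) * μ p := by
    rw [sumcomm, Finset.mul_sum]
    refine Finset.sum_congr rfl fun p hp => ?_
    rw [sin_ball_key n hn p hp]
    ring
  have exists_p : ∃ p ∈ I, lam * μ p ≤ ∑ i ∈ lball n p 1, μ i := by
    by_contra hc
    push_neg at hc
    have hne : I.Nonempty := ⟨1, by simp [hI]; omega⟩
    have hlt : ∑ p ∈ I, Real.sin (p * θ) * (∑ i ∈ lball n p 1, μ i)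
        < ∑ p ∈ I, Real.sin (p * θ) * (lam * μ p) :=
      Finset.sum_lt_sum_of_nonempty hne fun p hp =>
        mul_lt_mul_of_pos_left (hc p hp) (hsin p hp)
    rw [main] at hlt
    have heq : ∑ p ∈ I, Real.sin (p * θ) * (lam * μ p)
        = lam * ∑ p ∈ I, Real.sin (p * θ) * μ p := by
      rw [Finset.mul_sum]; exact Finset.sum_congr rfl fun p _ => by ring
    rw [heq] at hlt
    exact lt_irrefl _ hlt
  obtain ⟨p, hp, hple⟩ := exists_p
  have hpIcc := hp
  simp only [hI, Finset.mem_Icc] at hpIcc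
  have hμp : 0 < μ p := hμ p hp
  have hr : lam ≤ lratio n μ p 0 := by
    unfold lratio
    rw [lball_zero n p hpIcc.1 hpIcc.2, Finset.sum_singleton,
      show 2 * 0 + 1 = 1 from rfl, le_div_iff₀ hμp]
    linarith
  calc lam ≤ lratio n μ p 0 := hr
    _ ≤ Cmu n μ := by
        rw [Cmu_eq]
        exact le_csSup (ratioSet_bddAbove n μ) (lratio_mem n μ p 0 hpIcc.1 hpIcc.2)

/-! ### The upper bound via a concave quadratic weight -/

/-- A strictly concave positive weight on `{1,…,n}` whose doubling constant is `< 3`. -/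
noncomputable def qwt (n : ℕ) : ℕ → ℝ :=
  fun i => 8 * ((n : ℝ) - 1) ^ 2 - (2 * (i : ℝ) - ((n : ℝ) + 1)) ^ 2

lemma qwt_bound (n : ℕ) (hn : 2 ≤ n) (i : ℕ) (hi : i ∈ Finset.Icc 1 n) :
    7 * ((n : ℝ) - 1) ^ 2 ≤ qwt n i ∧ qwt n i ≤ 8 * ((n : ℝ) - 1) ^ 2 := by
  simp only [Finset.mem_Icc] at hi
  have h1 : (1 : ℝ) ≤ (i : ℝ) := by exact_mod_cast hi.1
  have h2 : (i : ℝ) ≤ (n : ℝ) := by exact_mod_cast hi.2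
  have hn' : (2 : ℝ) ≤ (n : ℝ) := by exact_mod_cast hn
  unfold qwt
  constructor <;> nlinarith [sq_nonneg (2 * (i : ℝ) - ((n : ℝ) + 1))]

lemma qwt_pos (n : ℕ) (hn : 2 ≤ n) (i : ℕ) (hi : i ∈ Finset.Icc 1 n) : 0 < qwt n i := by
  have := (qwt_bound n hn i hi).1
  have hn' : (2 : ℝ) ≤ (n : ℝ) := by exact_mod_cast hn
  nlinarith

set_option maxHeartbeats 1000000 in
lemma qwt_ratio_le (n : ℕ) (hn : 2 ≤ n) (j k : ℕ) (hj1 : 1 ≤ j) (hj2 : j ≤ n) :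
    lratio n (qwt n) j k ≤ 3 - 1 / (8 * ((n : ℝ) - 1) ^ 2) := by
  set A : ℝ := ((n : ℝ) - 1) ^ 2 with hA
  have hn' : (2 : ℝ) ≤ (n : ℝ) := by exact_mod_cast hn
  have hA1 : (1 : ℝ) ≤ A := by rw [hA]; nlinarith
  have hnum : ∑ i ∈ lball n j (2 * k + 1), qwt n i
      ≤ ((lball n j (2 * k + 1)).card : ℝ) * (8 * A) := by
    have := Finset.sum_le_card_nsmul (lball n j (2 * k + 1)) (qwt n) (8 * A)
      (fun i hi => (qwt_bound n hn i (lball_subset _ _ _ hi)).2)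
    simpa [nsmul_eq_mul] using this
  have hden : ((lball n j k).card : ℝ) * (7 * A) ≤ ∑ i ∈ lball n j k, qwt n i := by
    have := Finset.card_nsmul_le_sum (lball n j k) (qwt n) (7 * A)
      (fun i hi => (qwt_bound n hn i (lball_subset _ _ _ hi)).1)
    simpa [nsmul_eq_mul] using this
  have hc1 : (lball n j k).card = min n (j + k) + 1 - max 1 (j - k) := lball_card n j k
  have hc2 : (lball n j (2 * k + 1)).card
      = min n (j + (2 * k + 1)) + 1 - max 1 (j - (2 * k + 1)) := lball_card n j (2 * k + 1)
  have hc1pos : 1 ≤ (lball n j k).card := by omega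
  have hdenpos : (0 : ℝ) < ∑ i ∈ lball n j k, qwt n i := by
    have hcast : (1 : ℝ) ≤ ((lball n j k).card : ℝ) := by exact_mod_cast hc1pos
    nlinarith
  have hBpos : (0 : ℝ) < 1 / (8 * A) := by positivity
  have hB : (1 / (8 * A)) * (8 * A) = 1 := by field_simp
  have hAB : A * (1 / (8 * A)) = 1 / 8 := by field_simp
  have h3B : (0 : ℝ) ≤ 3 - 1 / (8 * A) := by nlinarith
  rw [lratio, div_le_iff₀ hdenpos]
  rcases Nat.eq_zero_or_pos k with hk | hk
  · -- k = 0
    subst hk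
    rw [lball_zero n j hj1 hj2, Finset.sum_singleton] at hden hdenpos ⊢
    by_cases hint : 2 ≤ j ∧ j + 1 ≤ n
    · -- interior : the radius-1 ball is {j-1, j, j+1}
      have hb : lball n j (2 * 0 + 1) = {j - 1, j, j + 1} := by
        ext i; simp [lball]; omega
      rw [hb, Finset.sum_insert (by simp <;> omega), Finset.sum_insert (by simp <;> omega),
        Finset.sum_singleton]
      have hsum : qwt n (j - 1) + (qwt n j + qwt n (j + 1)) = 3 * qwt n j - 8 := by
        have hcj : ((j - 1 : ℕ) : ℝ) = (j : ℝ) - 1 := by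
          push_cast [Nat.cast_sub (show 1 ≤ j by omega)]; try ring
        unfold qwt
        rw [hcj]; push_cast; ring
      rw [hsum]
      have hub : qwt n j ≤ 8 * A := (qwt_bound n hn j (by simp [Finset.mem_Icc]; omega)).2
      linarith [mul_le_mul_of_nonneg_left hub hBpos.le, hB]
    · -- boundary : the radius-1 ball has at most 2 points
      have hql : 7 * A ≤ qwt n j := (qwt_bound n hn j (by simp [Finset.mem_Icc]; omega)).1
      have hcard2 : ((lball n j (2 * 0 + 1)).card : ℝ) ≤ 2 := by
        have : (lball n j (2 * 0 + 1)).card ≤ 2 := by rw [hc2]; omega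
        exact_mod_cast this
      have h8A : (0 : ℝ) ≤ 8 * A := by nlinarith
      have h1 : ∑ i ∈ lball n j (2 * 0 + 1), qwt n i ≤ 2 * (8 * A) :=
        le_trans hnum (mul_le_mul_of_nonneg_right hcard2 h8A)
      have h2 : (3 - 1 / (8 * A)) * (7 * A) ≤ (3 - 1 / (8 * A)) * qwt n j :=
        mul_le_mul_of_nonneg_left hql h3B
      linarith [h1, h2, hAB, hA1]
  · -- k ≥ 1
    have hcard : (lball n j (2 * k + 1)).card ≤ 2 * (lball n j k).card + 1
        ∧ 2 ≤ (lball n j k).card := by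
      constructor <;> omega
    have hcast2 : ((lball n j (2 * k + 1)).card : ℝ) ≤ 2 * ((lball n j k).card : ℝ) + 1 := by
      exact_mod_cast hcard.1
    have hcast1 : (2 : ℝ) ≤ ((lball n j k).card : ℝ) := by exact_mod_cast hcard.2
    have h8A : (0 : ℝ) ≤ 8 * A := by nlinarith
    have h1 : ∑ i ∈ lball n j (2 * k + 1), qwt n i
        ≤ (2 * ((lball n j k).card : ℝ) + 1) * (8 * A) :=
      le_trans hnum (mul_le_mul_of_nonneg_right hcast2 h8A)
    have h2 : (3 - 1 / (8 * A)) * (((lball n j k).card : ℝ) * (7 * A))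
        ≤ (3 - 1 / (8 * A)) * ∑ i ∈ lball n j k, qwt n i :=
      mul_le_mul_of_nonneg_left hden h3B
    have hABc1 : (A * (1 / (8 * A))) * ((lball n j k).card : ℝ)
        = (1 / 8) * ((lball n j k).card : ℝ) := by rw [hAB]
    have hprod : (0 : ℝ) ≤ (A - 1) * (5 * ((lball n j k).card : ℝ) - 8) :=
      mul_nonneg (by linarith) (by linarith)
    linarith [h1, h2, hABc1, hprod, hcast1, hA1]

/-- For every `n ≥ 2`, the least doubling constant of the path graph `L_n` satisfies
`1 + 2 cos(π/(n+1)) ≤ C_{L_n} < 3`. -/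
theorem stmt_16 (n : ℕ) (hn : 2 ≤ n) :
    1 + 2 * Real.cos (π / (n + 1)) ≤ CLn n ∧ CLn n < 3 := by
  have hn' : (2 : ℝ) ≤ (n : ℝ) := by exact_mod_cast hn
  have hA1 : (1 : ℝ) ≤ ((n : ℝ) - 1) ^ 2 := by nlinarith
  have h8A : (0 : ℝ) < 8 * ((n : ℝ) - 1) ^ 2 := by nlinarith
  have hBpos : (0 : ℝ) < 1 / (8 * ((n : ℝ) - 1) ^ 2) := by positivity
  have hmem : Cmu n (qwt n) ∈
      {c | ∃ μ : ℕ → ℝ, (∀ j ∈ Finset.Icc 1 n, 0 < μ j) ∧ c = Cmu n μ} :=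
    ⟨qwt n, qwt_pos n hn, rfl⟩
  have hbdd : BddBelow {c | ∃ μ : ℕ → ℝ, (∀ j ∈ Finset.Icc 1 n, 0 < μ j) ∧ c = Cmu n μ} := by
    refine ⟨0, ?_⟩
    rintro c ⟨μ, hμ, rfl⟩
    exact Cmu_nonneg n hn μ hμ
  constructor
  · refine le_csInf ⟨_, hmem⟩ ?_
    rintro c ⟨μ, hμ, rfl⟩
    exact Cmu_lb n hn μ hμ
  · have hub : Cmu n (qwt n) ≤ 3 - 1 / (8 * ((n : ℝ) - 1) ^ 2) := by
      rw [Cmu_eq]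
      apply Real.sSup_le
      · rintro x ⟨j, hj, k, rfl⟩
        simp only [Finset.mem_Icc] at hj
        exact qwt_ratio_le n hn j k hj.1 hj.2
      · have hle1 : 1 / (8 * ((n : ℝ) - 1) ^ 2) ≤ 1 := by
          rw [div_le_one h8A]; nlinarith
        linarith
    calc CLn n ≤ Cmu n (qwt n) := csInf_le hbdd hmem
      _ ≤ 3 - 1 / (8 * ((n : ℝ) - 1) ^ 2) := hub
      _ < 3 := by linarith
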